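/- (Constrained quasi L²-projection, reproduction part.) Assume in addition that B_1(a) = 1 and B_i(a) = 0 for all i ≥ 2, and that the approximate duality property holds on a linear subspace P ⊆ V. Let f = Σ_{i=1}^N d_i B_i ∈ P satisfy f(a) = 0 (pointwise value of the continuous representative). Then the unique minimizer c of J(c) = ½ cᵀ Ĝ c − cᵀ f̂, where f̂_i = ⟨f, B_i⟩, subject to the constraint c_1 = 0, satisfies Σ_{i=1}^N c_i B_i = f; that is, the constrained quasi-interpolant reproduces every element of P that vanishes at the left endpoint a. -/

import Mathlib

open MeasureTheory Matrix

/-- Constrained quasi L²-projection, reproduction part: Assume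
`B 1 (a) = 1` and `B i (a) = 0` for `i ≥ 2`, and that the approximate duality property
holds on a linear subspace `P ⊆ V`. If `f = ∑ i d i • B i ∈ P` satisfies `f a = 0`,
then the unique minimizer `c` of `J(c) = ½ cᵀ Ĝ c − cᵀ f̂` (with `f̂ i = ⟨f, B i⟩`)
subject to `c 1 = 0` satisfies `∑ i c i • B i = f`: the constrained quasi-interpolant
reproduces every element of `P` vanishing at the left endpoint. -/
theorem constrained_quasi_l2_projection_reproduction
    (a b : ℝ) (hab : a < b) (n : ℕ)
    (B : Fin (n + 2) → ℝ → ℝ)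
    (hBcont : ∀ i, ContinuousOn (B i) (Set.Icc a b))
    (hBli : ∀ c : Fin (n + 2) → ℝ,
      (∀ᵐ x ∂(volume.restrict (Set.Icc a b)), ∑ i, c i * B i x = 0) → c = 0)
    (G : Matrix (Fin (n + 2)) (Fin (n + 2)) ℝ)
    (hG : ∀ i j, G i j = ∫ x in Set.Icc a b, B i x * B j x)
    (D : Fin (n + 2) → ℝ → ℝ)
    (hD : ∀ i x, D i x = ∑ j, G⁻¹ i j * B j x)
    (S : Matrix (Fin (n + 2)) (Fin (n + 2)) ℝ) (hS : S.PosDef)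
    (Ghat : Matrix (Fin (n + 2)) (Fin (n + 2)) ℝ) (hGhat : Ghat = S⁻¹)
    (Dhat : Fin (n + 2) → ℝ → ℝ)
    (hDhat : ∀ i x, Dhat i x = ∑ j, S i j * B j x)
    (P : Submodule ℝ (ℝ → ℝ))
    (hPV : P ≤ Submodule.span ℝ (Set.range B))
    (hdual : ∀ f ∈ P, ∀ i,
      (∫ x in Set.Icc a b, f x * Dhat i x) = ∫ x in Set.Icc a b, f x * D i x)
    (hB0a : B 0 a = 1)
    (hBia : ∀ i : Fin (n + 2), i ≠ 0 → B i a = 0)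
    (d : Fin (n + 2) → ℝ) (f : ℝ → ℝ)
    (hf : ∀ x, f x = ∑ i, d i * B i x)
    (hfP : f ∈ P)
    (hfa : f a = 0)
    (fhat : Fin (n + 2) → ℝ)
    (hfhat : ∀ i, fhat i = ∫ x in Set.Icc a b, f x * B i x)
    (J : (Fin (n + 2) → ℝ) → ℝ)
    (hJ : ∀ c : Fin (n + 2) → ℝ, J c = (1 / 2) * (c ⬝ᵥ Ghat.mulVec c) - c ⬝ᵥ fhat) :
    ∀ c : Fin (n + 2) → ℝ, c 0 = 0 → (∀ e : Fin (n + 2) → ℝ, e 0 = 0 → J c ≤ J e) →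
      ∀ x, (∑ i, c i * B i x) = f x := by
  intro c hc0 hmin x
  classical
  -- integrability facts
  have hIntBB : ∀ i j : Fin (n + 2), IntegrableOn (fun x => B i x * B j x) (Set.Icc a b) :=
    fun i j => ((hBcont i).mul (hBcont j)).integrableOn_compact isCompact_Icc
  have hfcont : ContinuousOn f (Set.Icc a b) := by
    have hfe : f = fun x => ∑ i, d i * B i x := funext hf
    rw [hfe]
    exact continuousOn_finset_sum _ fun i _ => continuousOn_const.mul (hBcont i)
  have hIntfB : ∀ j : Fin (n + 2), IntegrableOn (fun x => f x * B j x) (Set.Icc a b) :=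
    fun j => (hfcont.mul (hBcont j)).integrableOn_compact isCompact_Icc
  -- quadratic form identity
  have hquad : ∀ v w : Fin (n + 2) → ℝ,
      v ⬝ᵥ G *ᵥ w = ∫ x in Set.Icc a b, (∑ i, v i * B i x) * (∑ j, w j * B j x) := by
    intro v w
    have h1 : ∀ x, (∑ i, v i * B i x) * (∑ j, w j * B j x)
        = ∑ i, ∑ j, (v i * w j) * (B i x * B j x) := by
      intro x
      rw [Finset.sum_mul]
      refine Finset.sum_congr rfl fun i _ => ?_
      rw [Finset.mul_sum]
      exact Finset.sum_congr rfl fun j _ => by ring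
    have h2 : (∫ x in Set.Icc a b, (∑ i, v i * B i x) * (∑ j, w j * B j x))
        = ∑ i, ∑ j, (v i * w j) * G i j := by
      simp_rw [h1]
      rw [integral_finset_sum _ (fun i _ =>
        integrable_finset_sum _ (fun j _ => ((hIntBB i j).const_mul _)))]
      refine Finset.sum_congr rfl fun i _ => ?_
      rw [integral_finset_sum _ (fun j _ => ((hIntBB i j).const_mul _))]
      refine Finset.sum_congr rfl fun j _ => ?_
      rw [integral_const_mul, hG]
    rw [h2]
    simp only [dotProduct, mulVec, Finset.mul_sum]
    refine Finset.sum_congr rfl fun i _ => Finset.sum_congr rfl fun j _ => by ring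
  -- G is invertible
  have hGsymm : ∀ i j, G i j = G j i := by
    intro i j; rw [hG, hG]
    exact MeasureTheory.integral_congr_ae (Filter.Eventually.of_forall fun x => mul_comm _ _)
  have hGunit : IsUnit G.det := by
    rw [← Matrix.isUnit_iff_isUnit_det]
    rw [← Matrix.mulVec_injective_iff_isUnit]
    have hker : ∀ v : Fin (n + 2) → ℝ, G *ᵥ v = 0 → v = 0 := by
      intro v hv
      have hq : (∫ x in Set.Icc a b, (∑ i, v i * B i x) * (∑ j, v j * B j x)) = 0 := by
        rw [← hquad, hv, dotProduct_zero]
      have hgint : IntegrableOn (fun x => (∑ i, v i * B i x) * (∑ j, v j * B j x))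
          (Set.Icc a b) := by
        have hcont : ContinuousOn (fun x => ∑ i, v i * B i x) (Set.Icc a b) :=
          continuousOn_finset_sum _ fun i _ => continuousOn_const.mul (hBcont i)
        exact (hcont.mul hcont).integrableOn_compact isCompact_Icc
      have hzero : (fun x => (∑ i, v i * B i x) * (∑ j, v j * B j x))
          =ᵐ[volume.restrict (Set.Icc a b)] 0 := by
        rw [← MeasureTheory.integral_eq_zero_iff_of_nonneg
          (fun x => mul_self_nonneg _) hgint]
        exact hq
      refine hBli v ?_
      filter_upwards [hzero] with y hy
      have : (∑ i, v i * B i y) * (∑ j, v j * B j y) = 0 := hy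
      exact mul_self_eq_zero.mp this
    intro v w hvw
    have : G *ᵥ (v - w) = 0 := by rw [Matrix.mulVec_sub, hvw, sub_self]
    have := hker _ this
    exact sub_eq_zero.mp this
  -- d 0 = 0
  have hd0 : d 0 = 0 := by
    have h := hfa
    rw [hf a, Finset.sum_eq_single 0
      (fun i _ hi => by rw [hBia i hi, mul_zero]) (by simp)] at h
    rwa [hB0a, mul_one] at h
  -- fhat = G *ᵥ d
  have hfhatG : fhat = G *ᵥ d := by
    funext j
    rw [hfhat]
    have h1 : ∀ x, f x * B j x = ∑ k, (d k) * (B k x * B j x) := by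
      intro x
      rw [hf, Finset.sum_mul]
      exact Finset.sum_congr rfl fun k _ => by ring
    simp_rw [h1]
    rw [integral_finset_sum _ (fun k _ => ((hIntBB k j).const_mul _))]
    simp only [mulVec, dotProduct]
    refine Finset.sum_congr rfl fun k _ => ?_
    rw [integral_const_mul, hGsymm j k, hG k j]
    ring
  -- S *ᵥ fhat = d
  have hSd : S *ᵥ fhat = d := by
    have h1 : ∀ i, (S *ᵥ fhat) i = ∫ x in Set.Icc a b, f x * Dhat i x := by
      intro i
      have he : ∀ x, f x * Dhat i x = ∑ j, S i j * (f x * B j x) := by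
        intro x
        rw [hDhat, Finset.mul_sum]
        exact Finset.sum_congr rfl fun j _ => by ring
      simp_rw [he]
      rw [integral_finset_sum _ (fun j _ => ((hIntfB j).const_mul _))]
      simp only [mulVec, dotProduct]
      refine Finset.sum_congr rfl fun j _ => ?_
      rw [integral_const_mul, hfhat]
    have h2 : ∀ i, (G⁻¹ *ᵥ fhat) i = ∫ x in Set.Icc a b, f x * D i x := by
      intro i
      have he : ∀ x, f x * D i x = ∑ j, G⁻¹ i j * (f x * B j x) := by
        intro x
        rw [hD, Finset.mul_sum]
        exact Finset.sum_congr rfl fun j _ => by ring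
      simp_rw [he]
      rw [integral_finset_sum _ (fun j _ => ((hIntfB j).const_mul _))]
      simp only [mulVec, dotProduct]
      refine Finset.sum_congr rfl fun j _ => ?_
      rw [integral_const_mul, hfhat]
    have h3 : S *ᵥ fhat = G⁻¹ *ᵥ fhat := by
      funext i
      rw [h1 i, h2 i, hdual f hfP i]
    rw [h3, hfhatG, Matrix.mulVec_mulVec, Matrix.nonsing_inv_mul G hGunit,
      Matrix.one_mulVec]
  -- Ghat *ᵥ d = fhat
  have hGhatPD : Ghat.PosDef := hGhat ▸ hS.inv
  have hSunit : IsUnit S.det := hS.det_pos.ne'.isUnit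
  have hGhatd : Ghat *ᵥ d = fhat := by
    rw [hGhat, ← hSd, Matrix.mulVec_mulVec, Matrix.nonsing_inv_mul S hSunit,
      Matrix.one_mulVec]
  -- symmetry of Ghat in bilinear form
  have hGhsymm : ∀ u v : Fin (n + 2) → ℝ, u ⬝ᵥ Ghat *ᵥ v = v ⬝ᵥ Ghat *ᵥ u := by
    intro u v
    have hentry : ∀ i j, Ghat i j = Ghat j i := fun i j => by
      have := hGhatPD.1
      have h := congrFun (congrFun this j) i
      simpa [Matrix.conjTranspose_apply] using h
    simp only [dotProduct, mulVec, Finset.mul_sum]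
    rw [Finset.sum_comm]
    refine Finset.sum_congr rfl fun i _ => Finset.sum_congr rfl fun j _ => ?_
    rw [hentry j i]; ring
  -- stationarity
  set r : Fin (n + 2) → ℝ := Ghat *ᵥ c - fhat with hr
  have hstat : ∀ e : Fin (n + 2) → ℝ, e 0 = 0 → e ⬝ᵥ r = 0 := by
    intro e he0
    set α := e ⬝ᵥ r with hα
    set β := e ⬝ᵥ Ghat *ᵥ e with hβ
    have hβnn : 0 ≤ β := by
      have := hGhatPD.posSemidef.dotProduct_mulVec_nonneg e
      simpa [hβ] using this
    have hkey : ∀ t : ℝ, 0 ≤ t * α + t ^ 2 / 2 * β := by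
      intro t
      have hce : (c + t • e) 0 = 0 := by
        simp [hc0, he0]
      have h := hmin (c + t • e) hce
      rw [hJ, hJ] at h
      have hexp : (c + t • e) ⬝ᵥ Ghat *ᵥ (c + t • e)
          = c ⬝ᵥ Ghat *ᵥ c + 2 * t * (e ⬝ᵥ Ghat *ᵥ c) + t ^ 2 * β := by
        simp only [Matrix.mulVec_add, Matrix.mulVec_smul, add_dotProduct,
          dotProduct_add, smul_dotProduct, dotProduct_smul, smul_eq_mul]
        rw [hGhsymm c e]
        simp only [hβ]
        ring
      have hfd : (c + t • e) ⬝ᵥ fhat = c ⬝ᵥ fhat + t * (e ⬝ᵥ fhat) := by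
        rw [add_dotProduct, smul_dotProduct]; simp
      rw [hexp, hfd] at h
      have hαexp : α = e ⬝ᵥ Ghat *ᵥ c - e ⬝ᵥ fhat := by
        rw [hα, hr, dotProduct_sub]
      have hformula : t * α + t ^ 2 / 2 * β
          = (1 / 2 * (c ⬝ᵥ Ghat *ᵥ c + 2 * t * (e ⬝ᵥ Ghat *ᵥ c) + t ^ 2 * β)
              - (c ⬝ᵥ fhat + t * (e ⬝ᵥ fhat)))
            - (1 / 2 * (c ⬝ᵥ Ghat *ᵥ c) - c ⬝ᵥ fhat) := by
        rw [hαexp]; ring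
      rw [hformula]
      linarith
    by_contra hαne
    have h := hkey (-(α / (β + 1)))
    have hβ1 : (0:ℝ) < β + 1 := by linarith
    have : -(α / (β + 1)) * α + (-(α / (β + 1))) ^ 2 / 2 * β
        = -(α ^ 2 * (β + 2)) / (2 * (β + 1) ^ 2) := by
      field_simp
      ring
    rw [this] at h
    have hpos : 0 < α ^ 2 * (β + 2) := by
      have : 0 < α ^ 2 := by positivity
      nlinarith
    have hden : 0 < 2 * (β + 1) ^ 2 := by positivity
    have : -(α ^ 2 * (β + 2)) / (2 * (β + 1) ^ 2) < 0 := by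
      apply div_neg_of_neg_of_pos <;> [linarith; exact hden]
    linarith
  -- r i = 0 for i ≠ 0
  have hri : ∀ i : Fin (n + 2), i ≠ 0 → r i = 0 := by
    intro i hi
    have he0 : (Pi.single i 1 : Fin (n + 2) → ℝ) 0 = 0 :=
      by rw [Pi.single_eq_of_ne (Ne.symm hi)]
    have h := hstat (Pi.single i 1) he0
    rwa [single_dotProduct, one_mul] at h
  -- w := c - d is zero
  have hw : c - d = 0 := by
    set w := c - d with hwdef
    have hw0 : w 0 = 0 := by simp [hwdef, hc0, hd0]
    have hGw : Ghat *ᵥ w = r := by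
      rw [hwdef, Matrix.mulVec_sub, hGhatd, hr]
    have hwr : w ⬝ᵥ r = 0 := by
      rw [dotProduct]
      refine Finset.sum_eq_zero fun i _ => ?_
      by_cases hi : i = 0
      · rw [hi, hw0, zero_mul]
      · rw [hri i hi, mul_zero]
    by_contra hne
    have := hGhatPD.dotProduct_mulVec_pos hne
    rw [show star w = w from rfl] at this
    rw [hGw, hwr] at this
    exact lt_irrefl 0 this
  have hcd : c = d := sub_eq_zero.mp hw
  rw [hcd, ← hf x]
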